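/- Let μ be a measure on (0,∞) with ∫₀^∞ min(ζ, ζ²) μ(dζ) < +∞. Define g : ℝ × ((0,∞) × (0,∞)) → ℝ by g(x, (v, ζ)) = ζ·1_{v < x}. Then for every real m ≥ 1 the constant C_m := ∫₀^∞ (min(ζ, m))² μ(dζ) satisfies C_m ≤ m·∫₀^∞ min(ζ, ζ²) μ(dζ) < +∞, and for all 0 ≤ y ≤ x one has ∫₀^∞ ∫₀^∞ ( min(g(x,(v,ζ)), m) − min(g(y,(v,ζ)), m) )² dv μ(dζ) = (x − y)·C_m. In particular, the squared-difference bound ∫∫ (min(g(x,·),m) − min(g(y,·),m))² ≤ ρ_m(|x−y|)² holds with ρ_m(z) = √(C_m·z), a nondecreasing function with ∫₀ˣ ρ_m(z)⁻² dz = +∞ for every x > 0. -/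

import Mathlib

open Filter Set MeasureTheory Topology ENNReal

/-- Verification of condition (2)(iv) of Assumption 2.2 for the CBI-type jump
coefficient `g(x, (v, ζ)) = ζ · 1_{v < x}`: if `μ` is a measure on `(0,∞)` with
`∫ min(ζ, ζ²) μ(dζ) < ∞` and `m ≥ 1`, then `C_m = ∫ (min(ζ, m))² μ(dζ)` satisfies
`C_m ≤ m ∫ min(ζ, ζ²) μ(dζ) < ∞`; for `0 ≤ y ≤ x` the double integral
`∫∫ (min(g(x,(v,ζ)), m) − min(g(y,(v,ζ)), m))² dv μ(dζ)` equals `(x − y) · C_m`;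
and with `ρ_m(z) = √(C_m z)` (a nondecreasing function) one has the bound
`∫∫ (…)² ≤ ρ_m(|x − y|)²` for all `x, y ≥ 0` and the divergence
`∫₀ˣ ρ_m(z)⁻² dz = +∞` for all `x > 0` (convention `1/0 = +∞`). -/
theorem cbi_jump_coefficient_square_bound
    (μ : MeasureTheory.Measure ℝ)
    (hμ : ∫⁻ ζ in Set.Ioi (0 : ℝ), ENNReal.ofReal (min ζ (ζ ^ 2)) ∂μ < ⊤)
    (m : ℝ) (hm : 1 ≤ m)
    (g : ℝ → ℝ × ℝ → ℝ)
    (hg : ∀ (x v ζ : ℝ), g x (v, ζ) = if v < x then ζ else 0)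
    (Cm : ℝ≥0∞)
    (hCm : Cm = ∫⁻ ζ in Set.Ioi (0 : ℝ), ENNReal.ofReal ((min ζ m) ^ 2) ∂μ)
    (ρm : ℝ → ℝ)
    (hρm : ∀ z : ℝ, ρm z = Real.sqrt (Cm.toReal * z)) :
    (Cm ≤ ENNReal.ofReal m *
        ∫⁻ ζ in Set.Ioi (0 : ℝ), ENNReal.ofReal (min ζ (ζ ^ 2)) ∂μ) ∧
    (Cm < ⊤) ∧
    (∀ x y : ℝ, 0 ≤ y → y ≤ x →
      (∫⁻ ζ in Set.Ioi (0 : ℝ), (∫⁻ v in Set.Ioi (0 : ℝ),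
          ENNReal.ofReal ((min (g x (v, ζ)) m - min (g y (v, ζ)) m) ^ 2)) ∂μ)
        = ENNReal.ofReal (x - y) * Cm) ∧
    Monotone ρm ∧
    (∀ x y : ℝ, 0 ≤ x → 0 ≤ y →
      (∫⁻ ζ in Set.Ioi (0 : ℝ), (∫⁻ v in Set.Ioi (0 : ℝ),
          ENNReal.ofReal ((min (g x (v, ζ)) m - min (g y (v, ζ)) m) ^ 2)) ∂μ)
        ≤ ENNReal.ofReal ((ρm |x - y|) ^ 2)) ∧
    (∀ x : ℝ, 0 < x →
      ∫⁻ z in Set.Ioc (0 : ℝ) x, (ENNReal.ofReal ((ρm z) ^ 2))⁻¹ = ⊤) := by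
  have hm0 : (0 : ℝ) ≤ m := le_trans zero_le_one hm
  -- Part 1: pointwise bound and the inequality Cm ≤ m * ∫ min(ζ, ζ²)
  have hpt : ∀ ζ ∈ Set.Ioi (0 : ℝ),
      ENNReal.ofReal ((min ζ m) ^ 2)
        ≤ ENNReal.ofReal m * ENNReal.ofReal (min ζ (ζ ^ 2)) := by
    intro ζ hζ
    have hζ0 : (0 : ℝ) < ζ := hζ
    rw [← ENNReal.ofReal_mul hm0]
    apply ENNReal.ofReal_le_ofReal
    rcases le_or_gt ζ 1 with h | h
    · rw [min_eq_left (h.trans hm), min_eq_right (show ζ ^ 2 ≤ ζ by nlinarith)]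
      nlinarith
    · rw [min_eq_left (show ζ ≤ ζ ^ 2 by nlinarith)]
      have h1 : min ζ m ≤ m := min_le_right _ _
      have h2 : min ζ m ≤ ζ := min_le_left _ _
      have h3 : 0 ≤ min ζ m := le_min hζ0.le hm0
      nlinarith
  have part1 : Cm ≤ ENNReal.ofReal m *
      ∫⁻ ζ in Set.Ioi (0 : ℝ), ENNReal.ofReal (min ζ (ζ ^ 2)) ∂μ := by
    rw [hCm, ← lintegral_const_mul' _ _ ENNReal.ofReal_ne_top]
    exact setLIntegral_mono' measurableSet_Ioi hpt
  have part2 : Cm < ⊤ :=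
    lt_of_le_of_lt part1 (ENNReal.mul_lt_top ENNReal.ofReal_lt_top hμ)
  -- Part 3: exact computation of the double integral
  have key : ∀ x y : ℝ, 0 ≤ y → y ≤ x →
      (∫⁻ ζ in Set.Ioi (0 : ℝ), (∫⁻ v in Set.Ioi (0 : ℝ),
          ENNReal.ofReal ((min (g x (v, ζ)) m - min (g y (v, ζ)) m) ^ 2)) ∂μ)
        = ENNReal.ofReal (x - y) * Cm := by
    intro x y hy hyx
    have inner : ∀ ζ : ℝ,
        (∫⁻ v in Set.Ioi (0 : ℝ),
          ENNReal.ofReal ((min (g x (v, ζ)) m - min (g y (v, ζ)) m) ^ 2))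
        = ENNReal.ofReal ((min ζ m) ^ 2) * ENNReal.ofReal (x - y) := by
      intro ζ
      have hcong : ∀ᵐ v ∂(volume : Measure ℝ), v ∈ Set.Ioi (0 : ℝ) →
          ENNReal.ofReal ((min (g x (v, ζ)) m - min (g y (v, ζ)) m) ^ 2)
            = (Set.Ico y x).indicator
                (fun _ => ENNReal.ofReal ((min ζ m) ^ 2)) v := by
        refine Filter.Eventually.of_forall fun v _ => ?_
        rw [hg, hg]
        rcases lt_or_ge v y with h1 | h1
        · have h2 : v < x := h1.trans_le hyx
          rw [if_pos h1, if_pos h2,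
            Set.indicator_of_notMem (by simp [h1.not_ge])]
          simp
        · rcases lt_or_ge v x with h2 | h2
          · rw [if_neg h1.not_gt, if_pos h2, Set.indicator_of_mem (Set.mem_Ico.mpr ⟨h1, h2⟩),
              min_eq_left hm0, sub_zero]
          · rw [if_neg (not_lt.2 h2), if_neg (not_lt.2 (hyx.trans h2)),
              Set.indicator_of_notMem (by simp [h2.not_gt])]
            simp
      rw [setLIntegral_congr_fun_ae measurableSet_Ioi hcong,
        lintegral_indicator measurableSet_Ico, Measure.restrict_restrict
          measurableSet_Ico, setLIntegral_const]
      congr 1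
      have hle : (volume : Measure ℝ) (Set.Ico y x ∩ Set.Ioi 0)
          ≤ ENNReal.ofReal (x - y) := by
        calc (volume : Measure ℝ) (Set.Ico y x ∩ Set.Ioi 0)
            ≤ volume (Set.Ico y x) := measure_mono Set.inter_subset_left
          _ = ENNReal.ofReal (x - y) := Real.volume_Ico
      have hge : ENNReal.ofReal (x - y)
          ≤ (volume : Measure ℝ) (Set.Ico y x ∩ Set.Ioi 0) := by
        have hsub : Set.Ioo y x ⊆ Set.Ico y x ∩ Set.Ioi 0 := fun v hv =>
          ⟨⟨hv.1.le, hv.2⟩, lt_of_le_of_lt hy hv.1⟩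
        calc ENNReal.ofReal (x - y) = volume (Set.Ioo y x) :=
            Real.volume_Ioo.symm
          _ ≤ _ := measure_mono hsub
      exact le_antisymm hle hge
    calc (∫⁻ ζ in Set.Ioi (0 : ℝ), (∫⁻ v in Set.Ioi (0 : ℝ),
          ENNReal.ofReal ((min (g x (v, ζ)) m - min (g y (v, ζ)) m) ^ 2)) ∂μ)
        = ∫⁻ ζ in Set.Ioi (0 : ℝ),
            ENNReal.ofReal ((min ζ m) ^ 2) * ENNReal.ofReal (x - y) ∂μ := by
          exact lintegral_congr fun ζ => inner ζ
      _ = (∫⁻ ζ in Set.Ioi (0 : ℝ),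
            ENNReal.ofReal ((min ζ m) ^ 2) ∂μ) * ENNReal.ofReal (x - y) :=
          lintegral_mul_const' _ _ ENNReal.ofReal_ne_top
      _ = ENNReal.ofReal (x - y) * Cm := by rw [hCm, mul_comm]
  -- Part 4: monotonicity of ρm
  have part4 : Monotone ρm := by
    intro a b hab
    rw [hρm, hρm]
    exact Real.sqrt_le_sqrt (mul_le_mul_of_nonneg_left hab ENNReal.toReal_nonneg)
  -- helper: ρm z ^ 2 = Cm.toReal * z for 0 ≤ z
  have hρsq : ∀ z : ℝ, 0 ≤ z → (ρm z) ^ 2 = Cm.toReal * z := by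
    intro z hz
    rw [hρm, Real.sq_sqrt (mul_nonneg ENNReal.toReal_nonneg hz)]
  have hofρ : ∀ z : ℝ, 0 ≤ z →
      ENNReal.ofReal ((ρm z) ^ 2) = Cm * ENNReal.ofReal z := by
    intro z hz
    rw [hρsq z hz, ENNReal.ofReal_mul ENNReal.toReal_nonneg,
      ENNReal.ofReal_toReal part2.ne]
  -- Part 5: the square bound
  have part5 : ∀ x y : ℝ, 0 ≤ x → 0 ≤ y →
      (∫⁻ ζ in Set.Ioi (0 : ℝ), (∫⁻ v in Set.Ioi (0 : ℝ),
          ENNReal.ofReal ((min (g x (v, ζ)) m - min (g y (v, ζ)) m) ^ 2)) ∂μ)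
        ≤ ENNReal.ofReal ((ρm |x - y|) ^ 2) := by
    intro x y hx hy
    rcases le_total y x with h | h
    · rw [key x y hy h, hofρ _ (abs_nonneg _), abs_of_nonneg (sub_nonneg.2 h),
        mul_comm]
    · have hsym : ∀ v ζ : ℝ,
          ((min (g x (v, ζ)) m - min (g y (v, ζ)) m) ^ 2)
            = ((min (g y (v, ζ)) m - min (g x (v, ζ)) m) ^ 2) := fun v ζ => by
        ring
      simp only [hsym]
      rw [key y x hx h, hofρ _ (abs_nonneg _), abs_sub_comm,
        abs_of_nonneg (sub_nonneg.2 h), mul_comm]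
  -- Part 6: divergence of ∫ ρm(z)⁻²
  have part6 : ∀ x : ℝ, 0 < x →
      ∫⁻ z in Set.Ioc (0 : ℝ) x, (ENNReal.ofReal ((ρm z) ^ 2))⁻¹ = ⊤ := by
    intro x hx
    have hcong : ∀ᵐ z ∂(volume : Measure ℝ), z ∈ Set.Ioc (0 : ℝ) x →
        (ENNReal.ofReal ((ρm z) ^ 2))⁻¹
          = (ENNReal.ofReal (Cm.toReal * z))⁻¹ := by
      refine Filter.Eventually.of_forall fun z hz => ?_
      rw [hρsq z hz.1.le]
    rw [setLIntegral_congr_fun_ae measurableSet_Ioc hcong]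
    set c := Cm.toReal with hc
    have hc0 : 0 ≤ c := ENNReal.toReal_nonneg
    rcases eq_or_lt_of_le hc0 with hc0' | hc0'
    · -- c = 0 : integrand is ⊤ on a set of positive measure
      have : ∀ z : ℝ, (ENNReal.ofReal (c * z))⁻¹ = ⊤ := by
        intro z; rw [← hc0', zero_mul, ENNReal.ofReal_zero, ENNReal.inv_zero]
      simp only [this]
      rw [setLIntegral_const, Real.volume_Ioc, ENNReal.top_mul]
      simp [hx]
    · -- c > 0 : otherwise z ↦ (cz)⁻¹ would be integrable near 0
      by_contra hfin
      have hne : ∫⁻ z in Set.Ioc (0 : ℝ) x,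
          (ENNReal.ofReal (c * z))⁻¹ ≠ ⊤ := hfin
      have hmeas : AEMeasurable (fun z : ℝ => (ENNReal.ofReal (c * z))⁻¹)
          ((volume : Measure ℝ).restrict (Set.Ioc 0 x)) :=
        ((ENNReal.measurable_ofReal.comp (measurable_const_mul c)).inv).aemeasurable
      have hint := integrable_toReal_of_lintegral_ne_top hmeas hne
      have heq : ∀ᵐ z ∂((volume : Measure ℝ).restrict (Set.Ioc 0 x)),
          ((ENNReal.ofReal (c * z))⁻¹).toReal = (c * z)⁻¹ := by
        rw [ae_restrict_iff' measurableSet_Ioc]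
        refine Filter.Eventually.of_forall fun z hz => ?_
        have hcz : 0 < c * z := mul_pos hc0' hz.1
        rw [← ENNReal.ofReal_inv_of_pos hcz,
          ENNReal.toReal_ofReal (inv_nonneg.2 hcz.le)]
      have hint2 : IntegrableOn (fun z : ℝ => (c * z)⁻¹) (Set.Ioc 0 x) :=
        hint.congr heq
      have hint3 : IntegrableOn (fun z : ℝ => z⁻¹) (Set.Ioc 0 x) := by
        have h5 : IntegrableOn (fun z : ℝ => c * (c * z)⁻¹) (Set.Ioc 0 x) :=
          hint2.const_mul c
        refine IntegrableOn.congr_fun h5 ?_ measurableSet_Ioc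
        intro z hz
        show c * (c * z)⁻¹ = z⁻¹
        rw [mul_inv, ← mul_assoc, mul_inv_cancel₀ hc0'.ne', one_mul]
      have hint4 : IntegrableOn (fun z : ℝ => z ^ (-1 : ℝ)) (Set.Ioo 0 x) := by
        refine IntegrableOn.congr_fun
          (hint3.mono_set Set.Ioo_subset_Ioc_self) ?_ measurableSet_Ioo
        intro z hz
        show z⁻¹ = z ^ (-1 : ℝ)
        rw [Real.rpow_neg_one]
      rw [intervalIntegral.integrableOn_Ioo_rpow_iff hx] at hint4
      exact lt_irrefl (-1 : ℝ) hint4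
  exact ⟨part1, part2, key, part4, part5, part6⟩
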